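/- Quantile comparison for the split construction: let S ∈ ℝ^N and let S' ∈ ℝ^{N-τ*} be the subvector of S obtained by deleting its first τ* entries (0 ≤ τ* ≤ N-1). Then for any α ∈ (0,1), Quantile_{1-α}(S) ≥ Quantile_{1-α'}(S') where α' = α·N/(N-τ*). -/

import Mathlib

open MeasureTheory
open scoped ENNReal

/-- The `j`-th order statistic (1-indexed) of a finite real vector. -/
noncomputable def orderStat {m : ℕ} (v : Fin m → ℝ) (j : ℕ) : ℝ :=
  ((List.ofFn v).mergeSort (fun x y => x ≤ y)).getD (j - 1) 0

/-- `Quantile b v` is the `⌈b·m⌉`-th order statistic of `v ∈ ℝ^m`, with the conventions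
`Quantile b v = ⊤` if `b > 1` and `Quantile b v = ⊥` if `b ≤ 0`. -/
noncomputable def Quantile {m : ℕ} (b : ℝ) (v : Fin m → ℝ) : EReal :=
  if b > 1 then ⊤ else if b ≤ 0 then ⊥ else ((orderStat v ⌈b * m⌉.toNat : ℝ) : EReal)

/-- The deletion operator `Δ⁰_{k,τ}` of the paper (with `k` and `τ` counts of entries). -/
def delta0 {α : Type*} (m k τ : ℕ) (w : Fin m → α) : Fin (m - τ) → α :=
  fun i =>
    if i.val < m - τ - k then w ⟨i.val, by have := i.isLt; omega⟩
    else w ⟨i.val + τ, by have := i.isLt; omega⟩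

/-- The deletion operator `Δ¹_{k,τ}` of the paper. -/
def delta1 {α : Type*} (m k τ : ℕ) (w : Fin m → α) : Fin (m - τ) → α :=
  fun i =>
    if h : k + τ < m then
      if h2 : i.val < m - τ - k then w ⟨i.val + k + τ, by have := i.isLt; omega⟩
      else w ⟨i.val - (m - τ - k), by have := i.isLt; omega⟩
    else w ⟨(i.val + k + τ - m) % m, Nat.mod_lt _ (by have := i.isLt; omega)⟩

/-- Total variation distance between the laws of two random elements `U, V` under `P`. -/
noncomputable def dTV {Ω γ : Type*} [MeasurableSpace Ω] [MeasurableSpace γ]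
    (P : Measure Ω) (U V : Ω → γ) : ℝ :=
  ⨆ E : {E : Set γ // MeasurableSet E}, |(P (U ⁻¹' E.1)).toReal - (P (V ⁻¹' E.1)).toReal|

/-- The switch coefficient `Ψ_{k,τ}(W)` of a random vector `W` of length `m`. -/
noncomputable def switchCoef {Ω α : Type*} [MeasurableSpace Ω] [MeasurableSpace α]
    (P : Measure Ω) {m : ℕ} (W : Ω → Fin m → α) (k τ : ℕ) : ℝ :=
  dTV P (fun ω => delta0 m k τ (W ω)) (fun ω => delta1 m k τ (W ω))

/-- The averaged switch coefficient `Ψ̄_τ(W) = (1/m) ∑_{k=1}^m Ψ_{k,τ}(W)`. -/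
noncomputable def avgSwitchCoef {Ω α : Type*} [MeasurableSpace Ω] [MeasurableSpace α]
    (P : Measure Ω) {m : ℕ} (W : Ω → Fin m → α) (τ : ℕ) : ℝ :=
  (∑ k ∈ Finset.Icc 1 m, switchCoef P W k τ) / m

/-- Stationarity of a time series `Z = (Z_1,…,Z_{n+1})`. -/
def Stationary {Ω α : Type*} [MeasurableSpace Ω] [MeasurableSpace α]
    (P : Measure Ω) {n : ℕ} (Z : Ω → Fin (n + 1) → α) : Prop :=
  ∀ (ℓ i : ℕ) (h : i + ℓ ≤ n + 1),
    Measure.map (fun ω (j : Fin ℓ) => Z ω ⟨i + j.val, by have := j.isLt; omega⟩) P =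
      Measure.map (fun ω (j : Fin ℓ) => Z ω ⟨j.val, by have := j.isLt; omega⟩) P

/-- Exchangeability of a random vector. -/
def Exchangeable {Ω α : Type*} [MeasurableSpace Ω] [MeasurableSpace α]
    (P : Measure Ω) {n : ℕ} (Z : Ω → Fin (n + 1) → α) : Prop :=
  ∀ σ : Equiv.Perm (Fin (n + 1)),
    Measure.map (fun ω => Z ω ∘ σ) P = Measure.map Z P

/-- The β-mixing coefficient with lag `τ` of `Z`, defined via an independent copy `Z'`. -/
noncomputable def betaMix {Ω α : Type*} [MeasurableSpace Ω] [MeasurableSpace α]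
    (P : Measure Ω) (n : ℕ) (Z Z' : Ω → Fin (n + 1) → α) (τ : ℕ) : ℝ :=
  ⨆ k : Fin (n - τ),
    dTV P
      (fun ω (i : Fin (n + 1 - τ)) =>
        if i.val < k.val + 1 then Z ω ⟨i.val, by have := i.isLt; omega⟩
        else Z ω ⟨i.val + τ, by have := i.isLt; omega⟩)
      (fun ω (i : Fin (n + 1 - τ)) =>
        if i.val < k.val + 1 then Z ω ⟨i.val, by have := i.isLt; omega⟩
        else Z' ω ⟨i.val + τ, by have := i.isLt; omega⟩)


/-- If `l₁` is a sublist of a sorted list `l₂`, then the `i`-th entry of `l₁` is at most the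
`i + (l₂.length - l₁.length)`-th entry of `l₂`. -/
lemma aux_sublist_getD_le : ∀ {l₁ l₂ : List ℝ}, l₁.Sublist l₂ → l₂.Pairwise (· ≤ ·) →
    ∀ i, i < l₁.length → l₁.getD i 0 ≤ l₂.getD (i + (l₂.length - l₁.length)) 0 := by
  intro l₁ l₂ h
  induction h with
  | slnil => intro _ i hi; simp at hi
  | @cons l₁ l₂ a h ih =>
    intro hs i hi
    have hlen : l₁.length ≤ l₂.length := h.length_le
    have hidx : i + ((a :: l₂).length - l₁.length) = (i + (l₂.length - l₁.length)) + 1 := by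
      simp only [List.length_cons]; omega
    rw [hidx, List.getD_cons_succ]
    exact ih hs.of_cons i hi
  | @cons_cons l₁ l₂ a h ih =>
    intro hs i hi
    have hlen : l₁.length ≤ l₂.length := h.length_le
    have hidx : i + ((a :: l₂).length - (a :: l₁).length) = i + (l₂.length - l₁.length) := by
      simp only [List.length_cons]; omega
    rw [hidx]
    match i with
    | 0 =>
      rw [List.getD_cons_zero]
      rcases Nat.eq_zero_or_pos (l₂.length - l₁.length) with h0 | h0
      · simp [h0]
      · obtain ⟨d, hd⟩ : ∃ d, l₂.length - l₁.length = d + 1 := ⟨_, (Nat.succ_pred_eq_of_pos h0).symm⟩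
        have hdlt : d < l₂.length := by omega
        rw [hd]
        simp only [Nat.zero_add, List.getD_cons_succ]
        rw [List.getD_eq_getElem _ _ hdlt]
        exact List.rel_of_pairwise_cons hs (l₂.getElem_mem hdlt)
    | Nat.succ i' =>
      have hi' : i' < l₁.length := by simpa using hi
      have hidx2 : i' + 1 + (l₂.length - l₁.length) = (i' + (l₂.length - l₁.length)) + 1 := by omega
      rw [hidx2, List.getD_cons_succ, List.getD_cons_succ]
      exact ih hs.of_cons i' hi'
/-- Quantile comparison for the split construction: deleting the first `τ*` entries. -/
theorem stmt3 {N τs : ℕ} (hN : 1 ≤ N) (hτs : τs ≤ N - 1) (S : Fin N → ℝ)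
    (α : ℝ) (hα : 0 < α) (hα1 : α < 1) :
    Quantile (1 - α * (N : ℝ) / ((N : ℝ) - τs))
        (fun i : Fin (N - τs) => S ⟨i.val + τs, by have := i.isLt; omega⟩)
      ≤ Quantile (1 - α) S := by
  have hτsN : τs ≤ N := le_trans hτs (Nat.sub_le N 1)
  have hm1 : 1 ≤ N - τs := by omega
  have hmcast : ((N - τs : ℕ) : ℝ) = (N : ℝ) - τs := by rw [Nat.cast_sub hτsN]
  have hNpos : (0 : ℝ) < N := by exact_mod_cast hN
  have hmpos : (0 : ℝ) < (N : ℝ) - (τs : ℝ) := by rw [← hmcast]; exact_mod_cast hm1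
  set α' : ℝ := α * (N : ℝ) / ((N : ℝ) - τs) with hα'
  have hα'pos : 0 < α' := div_pos (mul_pos hα hNpos) hmpos
  have hαN : 0 < α * N := mul_pos hα hNpos
  set S' : Fin (N - τs) → ℝ := fun i : Fin (N - τs) => S ⟨i.val + τs, by have := i.isLt; omega⟩
    with hS'
  unfold Quantile
  rw [if_neg (show ¬(1 - α' > 1) by push_neg; linarith),
    if_neg (show ¬(1 - α > 1) by push_neg; linarith),
    if_neg (show ¬(1 - α ≤ 0) by push_neg; linarith)]
  by_cases hc : 1 - α' ≤ 0
  · rw [if_pos hc]; exact bot_le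
  · rw [if_neg hc]
    push_neg at hc
    have hα'1 : α' < 1 := by linarith
    have hαNm : α * N < (N : ℝ) - τs := by
      have := mul_lt_mul_of_pos_right hα'1 hmpos
      rw [hα', one_mul, div_mul_cancel₀ _ hmpos.ne'] at this
      exact this
    set f : ℕ := ⌊α * N⌋₊ with hfdef
    have hfle : (f : ℝ) ≤ α * N := Nat.floor_le hαN.le
    have hflt : f < N - τs := by
      have h1 : (f : ℝ) < ((N - τs : ℕ) : ℝ) := by rw [hmcast]; linarith
      exact_mod_cast h1
    have hceil : ∀ c : ℕ, f ≤ c → ⌈(c : ℝ) - α * N⌉.toNat = c - f := by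
      intro c hcf
      have h1 : ⌈(c : ℝ) - α * N⌉ = -⌊α * N⌋ + c := by
        rw [sub_eq_neg_add, show ((c : ℕ) : ℝ) = ((c : ℤ) : ℝ) by push_cast; ring,
          Int.ceil_add_intCast, Int.ceil_neg]
      have h2 : ⌊α * N⌋.toNat = f := Int.floor_toNat _
      have h3 : (0 : ℤ) ≤ ⌊α * N⌋ := Int.floor_nonneg.2 hαN.le
      omega
    have e1 : (1 - α') * ((N - τs : ℕ) : ℝ) = ((N - τs : ℕ) : ℝ) - α * N := by
      rw [hmcast, hα', sub_mul, one_mul, div_mul_cancel₀ _ hmpos.ne']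
    have e2 : (1 - α) * (N : ℝ) = ((N : ℕ) : ℝ) - α * N := by push_cast; ring
    rw [e1, e2, hceil _ hflt.le, hceil _ (by omega)]
    rw [EReal.coe_le_coe_iff]
    -- Now a statement about order statistics of `S'` and `S`.
    unfold orderStat
    set L₁ : List ℝ := (List.ofFn S').mergeSort (fun x y => x ≤ y) with hL₁
    set L₂ : List ℝ := (List.ofFn S).mergeSort (fun x y => x ≤ y) with hL₂
    have hlen₁ : L₁.length = N - τs := by
      rw [hL₁, List.length_mergeSort, List.length_ofFn]
    have hlen₂ : L₂.length = N := by
      rw [hL₂, List.length_mergeSort, List.length_ofFn]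
    have hs₁ : L₁.Pairwise (· ≤ ·) := List.pairwise_mergeSort' _ _
    have hs₂ : L₂.Pairwise (· ≤ ·) := List.pairwise_mergeSort' _ _
    have hofn : List.ofFn S' = (List.ofFn S).drop τs := by
      apply List.ext_getElem
      · simp [hτsN]
      · intro i h1 h2
        simp only [List.getElem_ofFn, List.getElem_drop, hS']
        congr 1
        exact Fin.ext (by simp [Nat.add_comm])
    have hsub : L₁.Sublist L₂ := by
      have hsp : L₁.Subperm L₂ := by
        refine List.Subperm.trans ?_ (List.Perm.subperm (List.mergeSort_perm _ _).symm)
        refine List.Subperm.trans (List.Perm.subperm (List.mergeSort_perm _ _)) ?_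
        rw [hofn]
        exact (List.drop_sublist _ _).subperm
      obtain ⟨l, hlp, hls⟩ := hsp
      have : l = L₁ := hlp.eq_of_pairwise' (hs₂.sublist hls) hs₁
      rwa [this] at hls
    have hkey := aux_sublist_getD_le hsub hs₂ (N - τs - f - 1) (by omega)
    rw [hlen₁, hlen₂] at hkey
    have hidx : N - τs - f - 1 + (N - (N - τs)) = N - f - 1 := by omega
    rw [hidx] at hkey
    exact hkey
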